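/- Let n be a nonnegative integer and let ω : (0,∞) → (0,∞) be an increasing function for which there exist q < n+1 and C_q > 0 with ω(st) ≤ C_q s^q ω(t) for all s ≥ 1, t > 0. Then there is a constant C' such that for all δ ∈ (0,1): ∫_δ^1 ω(t) t^{−n−2} dt ≤ C' ω(δ) δ^{−n−1}. -/

import Mathlib

open MeasureTheory Metric Set Filter Topology

noncomputable section

/-- Euclidean space `ℝ^d`. -/
abbrev Euc (d : ℕ) : Type := EuclideanSpace ℝ (Fin d)

/-- `K` is an even function. -/
def IsEvenFun {d : ℕ} (K : Euc d → ℝ) : Prop := ∀ x, K (-x) = K x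

/-- `K` is positively homogeneous of degree `-d`. -/
def HomogNegD (d : ℕ) (K : Euc d → ℝ) : Prop :=
  ∀ t : ℝ, 0 < t → ∀ x : Euc d, x ≠ 0 → K (t • x) = t ^ (-(d : ℝ)) * K x

/-- `K` has zero integral over the unit sphere with respect to the
`(d-1)`-dimensional Hausdorff measure. -/
def ZeroSphereInt (d : ℕ) (K : Euc d → ℝ) : Prop :=
  ∫ x in Metric.sphere (0 : Euc d) 1, K x ∂(μH[(d : ℝ) - 1]) = 0

/-- Calderón–Zygmund kernel of class `C^m`. -/
def IsCZKernel (d m : ℕ) (K : Euc d → ℝ) : Prop :=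
  ContDiffOn ℝ m K {(0 : Euc d)}ᶜ ∧ HomogNegD d K ∧ ZeroSphereInt d K

/-- Iterated partial derivative `D^β K` (computed away from the origin),
for the multi-index given as a list `β : Fin k → Fin d` of coordinate directions. -/
def pderivB {d : ℕ} (k : ℕ) (β : Fin k → Fin d) (K : Euc d → ℝ) (x : Euc d) : ℝ :=
  iteratedFDerivWithin ℝ k K {(0 : Euc d)}ᶜ x fun i => EuclideanSpace.single (β i) 1

/-- The first `d-1` coordinates `x'` of a point `x ∈ ℝ^d`. -/
def projHyp {d : ℕ} (x : Euc d) : Euc (d - 1) :=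
  WithLp.toLp 2 (fun i => x ⟨(i : ℕ), lt_of_lt_of_le i.isLt (Nat.sub_le d 1)⟩)

/-- The last coordinate `x_d` of a point `x ∈ ℝ^d`. -/
def lastCoord {d : ℕ} (x : Euc d) : ℝ :=
  if h : 0 < d then x ⟨d - 1, Nat.sub_lt h one_pos⟩ else 0

/-- The point `(x', t) ∈ ℝ^d` with first coordinates `x' ∈ ℝ^{d-1}` and last coordinate `t`. -/
def withLast {d : ℕ} (x' : Euc (d - 1)) (t : ℝ) : Euc d :=
  WithLp.toLp 2 (fun i => if h : (i : ℕ) < d - 1 then x' ⟨(i : ℕ), h⟩ else t)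

/-- Graph window at a boundary point `a`: after the shift and rotation `x ↦ rot (x - a)`
(sending `a` to the origin), inside the open cube of side `R` centered at the origin the
domain `D` is exactly the region above the graph of `A`. -/
def GraphWindow {d : ℕ} (D : Set (Euc d)) (a : Euc d) (R : ℝ) (A : Euc (d - 1) → ℝ)
    (rot : Euc d ≃ₗᵢ[ℝ] Euc d) : Prop :=
  ∀ x : Euc d, (∀ i, |(rot (x - a)) i| < R / 2) →
    (x ∈ D ↔ A (projHyp (rot (x - a))) < lastCoord (rot (x - a)))

/-- `(δ, R)`-Lipschitz domain. -/
def IsLipschitzDomain (d : ℕ) (δ R : ℝ) (D : Set (Euc d)) : Prop :=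
  IsOpen D ∧ Bornology.IsBounded D ∧ 0 < R ∧
    ∀ a ∈ frontier D, ∃ (rot : Euc d ≃ₗᵢ[ℝ] Euc d) (A : Euc (d - 1) → ℝ),
      LipschitzWith (Real.toNNReal δ) A ∧ GraphWindow D a R A rot

/-- Bounded domain with `C^1`-smooth boundary. -/
def IsC1Domain (d : ℕ) (D : Set (Euc d)) : Prop :=
  IsOpen D ∧ Bornology.IsBounded D ∧
    ∀ a ∈ frontier D, ∃ (R : ℝ) (rot : Euc d ≃ₗᵢ[ℝ] Euc d) (A : Euc (d - 1) → ℝ),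
      0 < R ∧ ContDiff ℝ 1 A ∧ GraphWindow D a R A rot

/-- Bounded domain with `C^{1+α}`-smooth boundary: the local parametrizations are `C^1`
with `α`-Hölder continuous gradient. -/
def IsC1AlphaDomain (d : ℕ) (α : ℝ) (D : Set (Euc d)) : Prop :=
  IsOpen D ∧ Bornology.IsBounded D ∧
    ∀ a ∈ frontier D, ∃ (R : ℝ) (rot : Euc d ≃ₗᵢ[ℝ] Euc d) (A : Euc (d - 1) → ℝ) (M : ℝ),
      0 < R ∧ ContDiff ℝ 1 A ∧
      (∀ u v : Euc (d - 1), ‖fderiv ℝ A u - fderiv ℝ A v‖ ≤ M * ‖u - v‖ ^ α) ∧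
      GraphWindow D a R A rot

/-- `C^ω` domain for a growth function `ω` of type `n`: a Lipschitz domain whose local
parametrizations are approximated by polynomials of degree at most `n` with error `≲ ω(|x'|)`. -/
def IsCOmegaDomain (d : ℕ) (n : ℕ) (ω : ℝ → ℝ) (D : Set (Euc d)) : Prop :=
  IsOpen D ∧ Bornology.IsBounded D ∧
    ∃ δ R CD : ℝ, 0 < R ∧ 0 < CD ∧
      ∀ a ∈ frontier D, ∃ (rot : Euc d ≃ₗᵢ[ℝ] Euc d) (A : Euc (d - 1) → ℝ)
          (P : MvPolynomial (Fin (d - 1)) ℝ),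
        LipschitzWith (Real.toNNReal δ) A ∧ GraphWindow D a R A rot ∧
        P.totalDegree ≤ n ∧
        ∀ x' : Euc (d - 1), ‖x'‖ ≤ R →
          |A x' - MvPolynomial.eval (fun i => x' i) P| ≤ CD * ω ‖x'‖

/-- `ω(t)/t^q` is almost decreasing: `ω(st) ≤ C s^q ω(t)` for `s ≥ 1`. -/
def AlmostDecreasingExp (ω : ℝ → ℝ) (q : ℝ) : Prop :=
  ∃ C : ℝ, 0 < C ∧ ∀ s t : ℝ, 1 ≤ s → 0 < t → ω (s * t) ≤ C * s ^ q * ω t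

/-- `ω(t)/t^r` is almost increasing: `ω(st) ≤ C s^r ω(t)` for `0 < s ≤ 1`. -/
def AlmostIncreasingExp (ω : ℝ → ℝ) (r : ℝ) : Prop :=
  ∃ C : ℝ, 0 < C ∧ ∀ s t : ℝ, 0 < s → s ≤ 1 → 0 < t → ω (s * t) ≤ C * s ^ r * ω t

/-- Growth function of type `n`. -/
def IsGrowthFunctionOfType (n : ℕ) (ω : ℝ → ℝ) : Prop :=
  ContinuousOn ω (Set.Ici 0) ∧ MonotoneOn ω (Set.Ici 0) ∧ ω 0 = 0 ∧
  (∀ t, 0 ≤ t → 0 ≤ ω t) ∧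
  (∃ q : ℝ, (n : ℝ) < q ∧ q < n + 1 ∧ AlmostDecreasingExp ω q) ∧
  (∀ r : ℝ, r < n → AlmostIncreasingExp ω r)

/-- The closed axis-parallel cube with center `x₀` and side length `ℓ`. -/
def cube {d : ℕ} (x₀ : Euc d) (ℓ : ℝ) : Set (Euc d) := {x | ∀ i, |x i - x₀ i| ≤ ℓ / 2}

/-- `‖f‖_{ω,D} ≤ N`: on every axis-parallel cube `Q ⊆ D` of side `ℓ` there is a polynomial
of degree at most `n` approximating `f` within `N·ω(ℓ)` in the sup norm. -/
def ZygBound {d : ℕ} (n : ℕ) (ω : ℝ → ℝ) (D : Set (Euc d)) (f : Euc d → ℝ) (N : ℝ) : Prop :=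
  ∀ (x₀ : Euc d) (ℓ : ℝ), 0 < ℓ → cube x₀ ℓ ⊆ D →
    ∃ P : MvPolynomial (Fin d) ℝ, P.totalDegree ≤ n ∧
      ∀ x ∈ cube x₀ ℓ, |f x - MvPolynomial.eval (fun i => x i) P| ≤ N * ω ℓ


open intervalIntegral in
private lemma stmt18_aux_rpow {δ : ℝ} (hδ : 0 < δ) (hδ1' : δ ≤ 1) {r : ℝ} (hrne : r ≠ -1) :
    ∫ t in Set.Ioc δ 1, (t : ℝ) ^ r = (1 - δ ^ (r + 1)) / (r + 1) := by
  rw [← intervalIntegral.integral_of_le hδ1', integral_rpow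
    (Or.inr ⟨hrne, by rw [Set.uIcc_of_le hδ1']; intro h; exact absurd h.1 (not_le.2 hδ)⟩)]
  rw [Real.one_rpow]

/-- For an increasing `ω : (0,∞) → (0,∞)` with `ω(st) ≤ C_q s^q ω(t)`
for `s ≥ 1` and `q < n+1`: `∫_δ^1 ω(t) t^{−n−2} dt ≤ C' ω(δ) δ^{−n−1}`. -/
theorem stmt18 (n : ℕ) (ω : ℝ → ℝ)
    (hpos : ∀ t : ℝ, 0 < t → 0 < ω t)
    (hmono : ∀ s t : ℝ, 0 < s → s ≤ t → ω s ≤ ω t)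
    (q : ℝ) (hq : q < n + 1) (Cq : ℝ) (hCq : 0 < Cq)
    (hdec : ∀ s t : ℝ, 1 ≤ s → 0 < t → ω (s * t) ≤ Cq * s ^ q * ω t) :
    ∃ C' : ℝ, ∀ δ : ℝ, 0 < δ → δ < 1 →
      ∫ t in Set.Ioc δ 1, ω t / t ^ (n + 2) ≤ C' * ω δ / δ ^ (n + 1) := by
  refine ⟨Cq / ((n : ℝ) + 1 - q), ?_⟩
  intro δ hδ hδ1
  have hδ1' : δ ≤ 1 := hδ1.le
  set r : ℝ := q - (n : ℝ) - 2 with hrdef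
  have hr1 : r + 1 = q - ((n : ℝ) + 1) := by rw [hrdef]; ring
  have hr1neg : r + 1 < 0 := by rw [hr1]; linarith
  have hrne : r ≠ -1 := by intro h; rw [h] at hr1neg; norm_num at hr1neg
  set ωc : ℝ → ℝ := fun t => ω (min (max t δ) 1) with hωc
  have hωcmono : Monotone ωc := by
    intro a b hab
    exact hmono _ _ (lt_min (lt_of_lt_of_le hδ (le_max_right a δ)) one_pos)
      (min_le_min (max_le_max hab le_rfl) le_rfl)
  have hωceq : ∀ t ∈ Set.Ioc δ 1, ωc t = ω t := by
    intro t ht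
    simp [hωc, max_eq_left ht.1.le, min_eq_left ht.2]
  set g : ℝ → ℝ := fun t => (Cq * ω δ / δ ^ q) * t ^ r with hg
  have hωδ : 0 < ω δ := hpos δ hδ
  have hδq : (0:ℝ) < δ ^ q := Real.rpow_pos_of_pos hδ q
  -- pointwise bound
  have hpoint : ∀ t ∈ Set.Ioc δ 1, ωc t / t ^ (n + 2) ≤ g t := by
    intro t ht
    have htpos : 0 < t := lt_trans hδ ht.1
    rw [hωceq t ht]
    have h1 : ω t ≤ Cq * (t / δ) ^ q * ω δ := by
      have := hdec (t / δ) δ (by rw [le_div_iff₀ hδ]; linarith [ht.1]) hδ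
      rwa [div_mul_cancel₀ _ hδ.ne'] at this
    have h2 : ω t / t ^ (n + 2) ≤ (Cq * (t / δ) ^ q * ω δ) / t ^ (n + 2) :=
      div_le_div_of_nonneg_right h1 (by positivity)
    refine h2.trans (le_of_eq ?_)
    have hpow : (t : ℝ) ^ (n + 2) = t ^ ((n : ℝ) + 2) := by
      rw [← Real.rpow_natCast t (n + 2)]; push_cast; ring_nf
    have hgt : g t = Cq * ω δ / δ ^ q * (t ^ q * (t ^ ((n:ℝ) + 2))⁻¹) := by
      show Cq * ω δ / δ ^ q * t ^ r = _
      rw [show r = q + (-((n:ℝ) + 2)) by rw [hrdef]; ring, Real.rpow_add htpos,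
        Real.rpow_neg htpos.le]
    have htq : (0:ℝ) < t ^ q := Real.rpow_pos_of_pos htpos q
    have htn : (0:ℝ) < t ^ ((n:ℝ) + 2) := Real.rpow_pos_of_pos htpos _
    rw [hgt, Real.div_rpow htpos.le hδ.le, hpow]
    field_simp
  -- integrability
  have hmeas : Measurable fun t : ℝ => ωc t / t ^ (n + 2) :=
    (hωcmono.measurable).div (measurable_id.pow_const (n + 2))
  have hδn2 : (0:ℝ) < δ ^ (n + 2) := by positivity
  have hfin : IntegrableOn (fun t => ωc t / t ^ (n + 2)) (Set.Ioc δ 1) := by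
    refine Integrable.mono' (g := fun _ => ω 1 / δ ^ (n + 2))
      (integrableOn_const measure_Ioc_lt_top.ne) hmeas.aestronglyMeasurable ?_
    filter_upwards [ae_restrict_mem measurableSet_Ioc] with t ht
    have htpos : 0 < t := lt_trans hδ ht.1
    have h1 : ωc t ≤ ω 1 := by rw [hωceq t ht]; exact hmono t 1 htpos ht.2
    have h0 : 0 ≤ ωc t := by rw [hωceq t ht]; exact (hpos t htpos).le
    rw [Real.norm_eq_abs, abs_of_nonneg (by positivity)]
    exact div_le_div₀ (le_trans h0 h1) h1 hδn2 (by gcongr; exact ht.1.le)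
  have hgint : IntegrableOn g (Set.Ioc δ 1) := by
    refine (ContinuousOn.integrableOn_Icc ?_).mono_set Set.Ioc_subset_Icc_self
    exact continuousOn_const.mul
      (continuousOn_id.rpow_const fun x hx => Or.inl (ne_of_gt (lt_of_lt_of_le hδ hx.1)))
  -- main chain
  calc ∫ t in Set.Ioc δ 1, ω t / t ^ (n + 2)
      = ∫ t in Set.Ioc δ 1, ωc t / t ^ (n + 2) := by
        refine setIntegral_congr_fun measurableSet_Ioc fun t ht => ?_
        rw [hωceq t ht]
    _ ≤ ∫ t in Set.Ioc δ 1, g t := setIntegral_mono_on hfin hgint measurableSet_Ioc hpoint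
    _ = (Cq * ω δ / δ ^ q) * ∫ t in Set.Ioc δ 1, (t : ℝ) ^ r := by
        rw [integral_const_mul]
    _ = (Cq * ω δ / δ ^ q) * ((1 - δ ^ (r + 1)) / (r + 1)) := by
        rw [stmt18_aux_rpow hδ hδ1' hrne]
    _ ≤ (Cq * ω δ / δ ^ q) * (δ ^ (r + 1) / ((n : ℝ) + 1 - q)) := by
        have hA : (0:ℝ) < δ ^ (r + 1) := Real.rpow_pos_of_pos hδ _
        have hc : (0:ℝ) < (n : ℝ) + 1 - q := by linarith
        have heq : (1 - δ ^ (r + 1)) / (r + 1) = (δ ^ (r + 1) - 1) / ((n : ℝ) + 1 - q) := by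
          rw [hr1, div_eq_div_iff (by intro h; linarith [sub_eq_zero.1 h]) hc.ne']
          ring
        have : (1 - δ ^ (r + 1)) / (r + 1) ≤ δ ^ (r + 1) / ((n : ℝ) + 1 - q) := by
          rw [heq]; gcongr; linarith
        exact mul_le_mul_of_nonneg_left this (by positivity)
    _ = Cq / ((n : ℝ) + 1 - q) * ω δ / δ ^ (n + 1) := by
        have hδn1 : δ ^ (n + 1) = δ ^ ((n : ℝ) + 1) := by
          rw [← Real.rpow_natCast δ (n + 1)]; push_cast; ring_nf
        rw [hδn1, hr1, Real.rpow_sub hδ]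
        have h1 : (0:ℝ) < δ ^ ((n:ℝ) + 1) := Real.rpow_pos_of_pos hδ _
        field_simp


end
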